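/- arXiv:1806.07947 — 2 statements merged into one kernel-verified Lean document; each statement's English description precedes it below -/
import Mathlib

section
/- Let $\mathcal{F}(x,t)$ and $\mathcal{G}(x,t) = \mathcal{F}(x,t) - e^{-\Omega t}\Omega P(x)$ where $\Omega P(x) = C(x)$ is a fixed vector for each $x$, and suppose the time average $\langle e^{-\Omega t} C(x) \rangle_t = 0$ and $\langle e^{-\Omega t} F(e^{\Omega t}x, t) \rangle$ exists. Define $\bar{\mathcal{F}}(x) = \langle \mathcal{F}(x,t)\rangle_t$, $\bar{\mathcal{G}}(x) = \langle \mathcal{G}(x,t)\rangle_t$, $\Delta\mathcal{F} = \mathcal{F} - \bar{\mathcal{F}}$, $\Delta\mathcal{G} = \mathcal{G} - \bar{\mathcal{G}}$. If moreover $\mathcal{F}(x,t)=e^{-\Omega t}F(e^{\Omega t}x,t)$ with $\Omega$ skew-symmetric real, $e^{-\Omega t}$ orthogonal, and $C(x) = \langle F(e^{\Omega t}x, t)\rangle_t$, then the inner product $\langle (\Delta\mathcal{F}(x,t) - \Delta\mathcal{G}(x,t))^T \Delta\mathcal{G}(x,t) \rangle_t = 0$ for every $x$. -/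
open Matrix Filter MeasureTheory intervalIntegral


lemma stmt3_exp_cont {d : ℕ} (Ω : Matrix (Fin d) (Fin d) ℝ) :
    Continuous fun t : ℝ => NormedSpace.exp (t • Ω) := by
  letI : SeminormedRing (Matrix (Fin d) (Fin d) ℝ) := Matrix.linftyOpSemiNormedRing
  letI : NormedRing (Matrix (Fin d) (Fin d) ℝ) := Matrix.linftyOpNormedRing
  letI : NormedAlgebra ℝ (Matrix (Fin d) (Fin d) ℝ) := Matrix.linftyOpNormedAlgebra
  letI : NormedAlgebra ℚ (Matrix (Fin d) (Fin d) ℝ) := Matrix.linftyOpNormedAlgebra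
  exact NormedSpace.exp_continuous.comp (continuous_id.smul continuous_const)

lemma stmt3_orth {d : ℕ} (Ω : Matrix (Fin d) (Fin d) ℝ) (hskew : Ωᵀ = -Ω) (t : ℝ)
    (u v : Fin d → ℝ) :
    ((NormedSpace.exp (-(t • Ω))) *ᵥ u) ⬝ᵥ ((NormedSpace.exp (-(t • Ω))) *ᵥ v)
      = u ⬝ᵥ v := by
  have htr : (NormedSpace.exp (-(t • Ω)))ᵀ = NormedSpace.exp (t • Ω) := by
    rw [← Matrix.exp_transpose]
    congr 1
    rw [transpose_neg, transpose_smul, hskew]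
    simp
  have hmul : (NormedSpace.exp (-(t • Ω)))ᵀ * NormedSpace.exp (-(t • Ω)) = 1 := by
    rw [htr, ← Matrix.exp_add_of_commute _ _ ((Commute.refl (t • Ω)).neg_right)]
    simp [NormedSpace.exp_zero]
  rw [Matrix.dotProduct_mulVec, ← Matrix.mulVec_transpose, Matrix.mulVec_mulVec, hmul,
    Matrix.one_mulVec]

noncomputable def stmt3_dotCLM {d : ℕ} (c : Fin d → ℝ) : (Fin d → ℝ) →L[ℝ] ℝ :=
  LinearMap.toContinuousLinearMap
    { toFun := fun v => c ⬝ᵥ v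
      map_add' := fun u v => dotProduct_add c u v
      map_smul' := fun r v => by
        simp [dotProduct_smul, smul_eq_mul] }

@[simp] lemma stmt3_dotCLM_apply {d : ℕ} (c v : Fin d → ℝ) :
    stmt3_dotCLM c v = c ⬝ᵥ v := rfl

/-- orthogonality in Theorem 1: with
`𝓕(x,t) = e^{-Ω t} F(e^{Ω t} x, t)`, `𝓖(x,t) = 𝓕(x,t) - e^{-Ω t} Ω P(x)`,
`Ω P(x) = C(x) = ⟨F(e^{Ω t} x, t)⟩_t`, `⟨e^{-Ω t} C(x)⟩_t = 0`, and
`F̄(x) = ⟨𝓕(x,t)⟩_t`, `Ḡ(x) = ⟨𝓖(x,t)⟩_t`, the time average of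
`(Δ𝓕 - Δ𝓖)ᵀ Δ𝓖` vanishes. -/
theorem stmt3 (d : ℕ)
    (Ω : Matrix (Fin d) (Fin d) ℝ) (hskew : Ωᵀ = -Ω)
    (F : (Fin d → ℝ) → ℝ → (Fin d → ℝ))
    (hFcont : Continuous fun p : (Fin d → ℝ) × ℝ => F p.1 p.2)
    (hFbdd : ∃ M : ℝ, ∀ x t, ‖F x t‖ ≤ M)
    (C P : (Fin d → ℝ) → (Fin d → ℝ))
    (hP : ∀ y, Ω.mulVec (P y) = C y)
    (calF calG : (Fin d → ℝ) → ℝ → (Fin d → ℝ))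
    (hcalF : ∀ y t, calF y t =
      (NormedSpace.exp (-(t • Ω))).mulVec (F ((NormedSpace.exp (t • Ω)).mulVec y) t))
    (hcalG : ∀ y t, calG y t =
      calF y t - (NormedSpace.exp (-(t • Ω))).mulVec (Ω.mulVec (P y)))
    (Fbar Gbar : (Fin d → ℝ) → (Fin d → ℝ))
    (x : Fin d → ℝ)
    (hCzero : Tendsto (fun T : ℝ =>
        (1 / T) • ∫ t in (0:ℝ)..T, (NormedSpace.exp (-(t • Ω))).mulVec (C x))
      atTop (nhds 0))
    (hC : Tendsto (fun T : ℝ =>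
        (1 / T) • ∫ t in (0:ℝ)..T, F ((NormedSpace.exp (t • Ω)).mulVec x) t)
      atTop (nhds (C x)))
    (hFbar : Tendsto (fun T : ℝ => (1 / T) • ∫ t in (0:ℝ)..T, calF x t)
      atTop (nhds (Fbar x)))
    (hGbar : Tendsto (fun T : ℝ => (1 / T) • ∫ t in (0:ℝ)..T, calG x t)
      atTop (nhds (Gbar x))) :
    Tendsto (fun T : ℝ =>
        (1 / T) * ∫ t in (0:ℝ)..T,
          dotProduct ((calF x t - Fbar x) - (calG x t - Gbar x)) (calG x t - Gbar x))
      atTop (nhds 0) := by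
  classical
  -- notation
  set E : ℝ → Matrix (Fin d) (Fin d) ℝ := fun t => NormedSpace.exp (-(t • Ω)) with hE
  set F' : ℝ → (Fin d → ℝ) := fun t => F ((NormedSpace.exp (t • Ω)) *ᵥ x) t with hF'
  set u : ℝ → (Fin d → ℝ) := fun t => E t *ᵥ C x with hu
  -- continuity facts
  have hEc : Continuous E := by
    have := stmt3_exp_cont (-Ω)
    simpa [smul_neg, neg_smul] using this
  have hexpc : Continuous fun t : ℝ => NormedSpace.exp (t • Ω) := stmt3_exp_cont Ω
  have hucont : Continuous u := hEc.matrix_mulVec continuous_const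
  have hF'cont : Continuous F' := by
    have : F' = (fun p : (Fin d → ℝ) × ℝ => F p.1 p.2) ∘
        fun t => ((NormedSpace.exp (t • Ω)) *ᵥ x, t) := rfl
    rw [this]
    exact hFcont.comp ((hexpc.matrix_mulVec continuous_const).prodMk continuous_id)
  have hcalFcont : Continuous (calF x) := by
    have : (calF x) = fun t => E t *ᵥ F' t := by
      funext t; rw [hcalF]
    rw [this]
    exact hEc.matrix_mulVec hF'cont
  have hcalGcont : Continuous (calG x) := by
    have : (calG x) = fun t => calF x t - u t := by
      funext t; rw [hcalG, hP]
    rw [this]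
    exact hcalFcont.sub hucont
  -- Fbar x = Gbar x
  have hFGx : Fbar x = Gbar x := by
    have hsplit : ∀ T : ℝ, (∫ t in (0:ℝ)..T, calF x t)
        = (∫ t in (0:ℝ)..T, calG x t) + ∫ t in (0:ℝ)..T, u t := by
      intro T
      rw [← intervalIntegral.integral_add (hcalGcont.intervalIntegrable _ _)
        (hucont.intervalIntegrable _ _)]
      congr 1; funext t
      rw [hcalG, hP]; abel
    have h1 : Tendsto (fun T : ℝ => (1 / T) • ∫ t in (0:ℝ)..T, calF x t) atTop
        (nhds (Gbar x + 0)) := by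
      have := hGbar.add hCzero
      refine this.congr fun T => ?_
      rw [hsplit, smul_add]
    rw [add_zero] at h1
    exact tendsto_nhds_unique hFbar h1
  -- pointwise identity for the integrand
  have hpt : ∀ t : ℝ,
      dotProduct ((calF x t - Fbar x) - (calG x t - Gbar x)) (calG x t - Gbar x)
        = (C x) ⬝ᵥ F' t - (C x) ⬝ᵥ (C x) - (Gbar x) ⬝ᵥ u t := by
    intro t
    have h1 : (calF x t - Fbar x) - (calG x t - Gbar x) = u t := by
      rw [hcalG, hP, hFGx]; simp [hu, hE]
    have h2 : calG x t - Gbar x = (E t *ᵥ F' t - u t) - Gbar x := by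
      rw [hcalG, hP, hcalF]
    rw [h1, h2, dotProduct_sub, dotProduct_sub, hu]
    rw [stmt3_orth Ω hskew t (C x) (F' t), stmt3_orth Ω hskew t (C x) (C x)]
    rw [dotProduct_comm (E t *ᵥ C x) (Gbar x)]
  -- integral identity
  have hint : ∀ T : ℝ, (∫ t in (0:ℝ)..T,
      dotProduct ((calF x t - Fbar x) - (calG x t - Gbar x)) (calG x t - Gbar x))
      = (C x) ⬝ᵥ (∫ t in (0:ℝ)..T, F' t) - T * ((C x) ⬝ᵥ (C x))
        - (Gbar x) ⬝ᵥ (∫ t in (0:ℝ)..T, u t) := by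
    intro T
    have e1 : (∫ t in (0:ℝ)..T, (C x) ⬝ᵥ F' t) = (C x) ⬝ᵥ (∫ t in (0:ℝ)..T, F' t) :=
      (stmt3_dotCLM (C x)).intervalIntegral_comp_comm (hF'cont.intervalIntegrable _ _)
    have e3 : (∫ t in (0:ℝ)..T, (Gbar x) ⬝ᵥ u t) = (Gbar x) ⬝ᵥ (∫ t in (0:ℝ)..T, u t) :=
      (stmt3_dotCLM (Gbar x)).intervalIntegral_comp_comm (hucont.intervalIntegrable _ _)
    calc (∫ t in (0:ℝ)..T,
        dotProduct ((calF x t - Fbar x) - (calG x t - Gbar x)) (calG x t - Gbar x))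
        = ∫ t in (0:ℝ)..T, ((C x) ⬝ᵥ F' t - (C x) ⬝ᵥ (C x) - (Gbar x) ⬝ᵥ u t) := by
          congr 1; funext t; exact hpt t
      _ = (∫ t in (0:ℝ)..T, ((C x) ⬝ᵥ F' t - (C x) ⬝ᵥ (C x)))
            - ∫ t in (0:ℝ)..T, (Gbar x) ⬝ᵥ u t := by
          apply intervalIntegral.integral_sub
          · exact ((continuous_const.dotProduct hF'cont).sub
              continuous_const).intervalIntegrable _ _
          · exact (continuous_const.dotProduct hucont).intervalIntegrable _ _
      _ = (∫ t in (0:ℝ)..T, (C x) ⬝ᵥ F' t) - (∫ t in (0:ℝ)..T, ((C x) ⬝ᵥ (C x) : ℝ))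
            - ∫ t in (0:ℝ)..T, (Gbar x) ⬝ᵥ u t := by
          rw [intervalIntegral.integral_sub
            ((continuous_const.dotProduct hF'cont).intervalIntegrable _ _)
            (intervalIntegrable_const)]
      _ = (C x) ⬝ᵥ (∫ t in (0:ℝ)..T, F' t) - T * ((C x) ⬝ᵥ (C x))
            - (Gbar x) ⬝ᵥ (∫ t in (0:ℝ)..T, u t) := by
          rw [e1, e3, intervalIntegral.integral_const]
          simp [smul_eq_mul]
  -- limits of the three pieces
  have l1 : Tendsto (fun T : ℝ => (C x) ⬝ᵥ ((1 / T) • ∫ t in (0:ℝ)..T, F' t)) atTop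
      (nhds ((C x) ⬝ᵥ (C x))) := by
    have h := ((stmt3_dotCLM (C x)).continuous.continuousAt.tendsto).comp hC
    exact h.congr fun T => rfl
  have l3 : Tendsto (fun T : ℝ => (Gbar x) ⬝ᵥ ((1 / T) • ∫ t in (0:ℝ)..T, u t)) atTop
      (nhds (0 : ℝ)) := by
    have h := ((stmt3_dotCLM (Gbar x)).continuous.continuousAt.tendsto).comp hCzero
    have h0 : stmt3_dotCLM (Gbar x) (0 : Fin d → ℝ) = 0 := by simp
    rw [h0] at h
    exact h.congr fun T => rfl
  have l2 : Tendsto (fun T : ℝ => (1 / T) * (T * ((C x) ⬝ᵥ (C x)))) atTop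
      (nhds ((C x) ⬝ᵥ (C x))) := by
    refine tendsto_const_nhds.congr' ?_
    filter_upwards [eventually_gt_atTop (0:ℝ)] with T hT
    field_simp
  -- assemble
  have hcomb := (l1.sub l2).sub l3
  rw [show ((C x) ⬝ᵥ (C x) - (C x) ⬝ᵥ (C x) - 0 : ℝ) = 0 by ring] at hcomb
  refine hcomb.congr fun T => ?_
  rw [hint T]
  rw [mul_sub, mul_sub, dotProduct_smul, dotProduct_smul]
  simp [smul_eq_mul, mul_assoc]
end

section
/- For real $a, b, c, d$ and real $x$ with $\sin x = a$, $\cos x = b$: if the four equations $\sin u = a$, $\cos u = b$, $\sin v = p(a,b)$, $\cos v = q(a,b)$ are consistent (i.e., $a^2+b^2 = 1$ and $p^2+q^2 = 1$), then setting $a = 2\gamma\omega/(r\alpha)$, $b = -\epsilon\sigma/(4D^2\omega^2 r)$, the constraint $a^2 + b^2 = 1$ plus the second constraint $p^2 + q^2 = 1$, where $p = ((4D^3\sigma\omega^2 + \sigma^2\epsilon)b + 8D^2 r\sigma\omega^2)/(8D^5 F\omega^2)$ and $q = (-(4D^3\sigma\omega^2 + \sigma^2\epsilon)a - 16\beta D^5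 r\omega^3)/(8D^5 F\omega^2)$, implies that $\sigma$ is a root of the quartic $A_0 + A_1\sigma + A_2\sigma^2 + A_3\sigma^3 + A_4\sigma^4 = 0$ with $A_0 = 1024\beta^2\gamma^2 D^{10}\omega^8 - 64\alpha^2 D^{10} F^2\omega^4$, $A_1 = 256\alpha\beta\gamma D^8\omega^6$, $A_2 = 16\alpha^2\beta^2 D^6\omega^2\epsilon^2 + 16\alpha^2 D^6\omega^4 + 64\alpha\beta\gamma D^5\omega^4\epsilon + 256\gamma^2 D^4\omega^6$, $A_3 = -8\alpha^2 D^3\omega^2\epsilon$, $A_4 = \alpha^2\epsilon^2$. -/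
/-- reduction of the CPUT fixed-point equations to the quartic
`A₀ + A₁σ + A₂σ² + A₃σ³ + A₄σ⁴ = 0` in `σ`. -/
theorem stmt9 (α β γ D F ω ε r σ a b p q : ℝ)
    (hα : α ≠ 0) (hD : D ≠ 0) (hF : F ≠ 0) (hω : ω ≠ 0) (hr : r ≠ 0)
    (ha : a = 2 * γ * ω / (r * α))
    (hb : b = -(ε * σ) / (4 * D ^ 2 * ω ^ 2 * r))
    (hp : p = ((4 * D ^ 3 * σ * ω ^ 2 + σ ^ 2 * ε) * b + 8 * D ^ 2 * r * σ * ω ^ 2)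
        / (8 * D ^ 5 * F * ω ^ 2))
    (hq : q = (-((4 * D ^ 3 * σ * ω ^ 2 + σ ^ 2 * ε) * a) - 16 * β * D ^ 5 * r * ω ^ 3)
        / (8 * D ^ 5 * F * ω ^ 2))
    (hab : a ^ 2 + b ^ 2 = 1)
    (hpq : p ^ 2 + q ^ 2 = 1) :
    (1024 * β ^ 2 * γ ^ 2 * D ^ 10 * ω ^ 8 - 64 * α ^ 2 * D ^ 10 * F ^ 2 * ω ^ 4)
      + (256 * α * β * γ * D ^ 8 * ω ^ 6) * σ
      + (16 * α ^ 2 * β ^ 2 * D ^ 6 * ω ^ 2 * ε ^ 2 + 16 * α ^ 2 * D ^ 6 * ω ^ 4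
          + 64 * α * β * γ * D ^ 5 * ω ^ 4 * ε + 256 * γ ^ 2 * D ^ 4 * ω ^ 6) * σ ^ 2
      + (-(8 * α ^ 2 * D ^ 3 * ω ^ 2 * ε)) * σ ^ 3
      + (α ^ 2 * ε ^ 2) * σ ^ 4 = 0 := by
  subst ha hb hp hq
  field_simp at hab hpq
  -- step 1: m r^2 = R
  have h1 : r ^ 2 * ((64*γ^2*D^4*ω^6 + α^2*ε^2*σ^2) - 16*α^2*D^4*ω^4*r^2) = 0 := by
    linear_combination r ^ 2 * hab
  have hr2 : 16*α^2*D^4*ω^4*r^2 = 64*γ^2*D^4*ω^6 + α^2*ε^2*σ^2 := by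
    have h := (mul_eq_zero.mp h1).resolve_left (pow_ne_zero 2 hr)
    linarith
  -- step 2: e2s = 0
  have h2 : ((8*D^5*F*ω^2)^2 * r^2) *
      (α^2*(-((4*D^3*σ*ω^2+σ^2*ε)*ε*σ) + 32*D^4*σ*ω^4*r^2)^2
        + 16*D^4*ω^4*(2*γ*ω*(4*D^3*σ*ω^2+σ^2*ε) + 16*β*α*D^5*ω^3*r^2)^2
        - 16*D^4*ω^4*α^2*(8*D^5*F*ω^2)^2*r^2) = 0 := by
    linear_combination (8*D^5*F*ω^2)^2 * r^2 * hpq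
  have hK : ((8*D^5*F*ω^2)^2 * r^2) ≠ 0 := by positivity
  have he2s : (α^2*(-((4*D^3*σ*ω^2+σ^2*ε)*ε*σ) + 32*D^4*σ*ω^4*r^2)^2
        + 16*D^4*ω^4*(2*γ*ω*(4*D^3*σ*ω^2+σ^2*ε) + 16*β*α*D^5*ω^3*r^2)^2
        - 16*D^4*ω^4*α^2*(8*D^5*F*ω^2)^2*r^2) = 0 :=
    (mul_eq_zero.mp h2).resolve_left hK
  -- step 3: combine
  have hRne : (64*γ^2*D^4*ω^6 + α^2*ε^2*σ^2) ≠ 0 := by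
    rw [← hr2]; positivity
  have key : (64*γ^2*D^4*ω^6 + α^2*ε^2*σ^2) * (256*α^2*D^8*ω^8) *
      ((1024 * β ^ 2 * γ ^ 2 * D ^ 10 * ω ^ 8 - 64 * α ^ 2 * D ^ 10 * F ^ 2 * ω ^ 4)
      + (256 * α * β * γ * D ^ 8 * ω ^ 6) * σ
      + (16 * α ^ 2 * β ^ 2 * D ^ 6 * ω ^ 2 * ε ^ 2 + 16 * α ^ 2 * D ^ 6 * ω ^ 4
          + 64 * α * β * γ * D ^ 5 * ω ^ 4 * ε + 256 * γ ^ 2 * D ^ 4 * ω ^ 6) * σ ^ 2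
      + (-(8 * α ^ 2 * D ^ 3 * ω ^ 2 * ε)) * σ ^ 3
      + (α ^ 2 * ε ^ 2) * σ ^ 4) = 0 := by
    linear_combination (16*α^2*D^4*ω^4)^2 * he2s
      - ((1024*α^2*D^8*σ^2*ω^8 + 4096*α^2*β^2*D^14*ω^10)
          * (16*α^2*D^4*ω^4*r^2 + (64*γ^2*D^4*ω^6 + α^2*ε^2*σ^2))
        + ((-(64*α^2*D^4*ε*σ^2*ω^4) + 1024*α*β*γ*D^9*ω^8)*(4*D^3*σ*ω^2+σ^2*ε)
            - 1024*α^2*D^14*F^2*ω^8) * (16*α^2*D^4*ω^4)) * hr2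
  exact (mul_eq_zero.mp key).resolve_left
    (mul_ne_zero hRne (by positivity))
end
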